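/- Let G be a simple graph with n ≥ 3 vertices and m edges with m/(n−1) < 3, and let v be a vertex of G of maximum degree Δ(G). Then the number of cycles of G that contain v is at most (Δ(G)/2)·3^{m/3}. -/

import Mathlib

/-- A subgraph of a simple graph is a cycle subgraph if it is connected (hence nonempty)
and every one of its vertices has exactly two neighbours in it. -/
def SimpleGraph.Subgraph.IsCycleSub {V : Type*} {G : SimpleGraph V} (H : G.Subgraph) : Prop :=
  H.coe.Connected ∧ ∀ v ∈ H.verts, (H.neighborSet v).ncard = 2

/-- `C(G)`: the number of cycles in a simple graph `G`, i.e. the number of distinct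
subgraphs of `G` that are cycles. -/
noncomputable def SimpleGraph.cycleCount {V : Type*} (G : SimpleGraph V) : ℕ :=
  {H : G.Subgraph | H.IsCycleSub}.ncard

/-- `C(m)`: the maximum number of cycles in a simple graph with `m` edges. -/
noncomputable def maxCycles (m : ℕ) : ℕ :=
  sSup {c : ℕ | ∃ (n : ℕ) (G : SimpleGraph (Fin n)), G.edgeSet.ncard = m ∧ c = G.cycleCount}

open SimpleGraph

namespace CycAux


lemma cube_le_three_pow (n : ℕ) : n ^ 3 ≤ 3 ^ n := by
  induction n with
  | zero => norm_num
  | succ k ih =>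
    rcases Nat.lt_or_ge k 3 with hk | hk
    · interval_cases k <;> norm_num
    · have h1 : (k + 1) ^ 3 ≤ 3 * k ^ 3 := by nlinarith [sq_nonneg k, hk]
      calc (k + 1) ^ 3 ≤ 3 * k ^ 3 := h1
        _ ≤ 3 * 3 ^ k := by omega
        _ = 3 ^ (k + 1) := by ring

lemma nat_le_rpow3 (n : ℕ) : (n : ℝ) ≤ (3 : ℝ) ^ ((n : ℝ) / 3) := by
  have h : ((n : ℝ)) ^ (3 : ℕ) ≤ (3 : ℝ) ^ (n : ℕ) := by
    exact_mod_cast cube_le_three_pow n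
  have h0 : (0 : ℝ) ≤ (n : ℝ) := Nat.cast_nonneg n
  have h1 : ((n : ℝ) ^ (3 : ℕ)) ^ ((1 : ℝ) / 3) ≤ ((3 : ℝ) ^ (n : ℕ)) ^ ((1 : ℝ) / 3) := by
    apply Real.rpow_le_rpow (by positivity) h (by norm_num)
  calc (n : ℝ) = ((n : ℝ) ^ (3 : ℕ)) ^ ((1 : ℝ) / 3) := by
        rw [← Real.rpow_natCast (n : ℝ) 3, ← Real.rpow_mul h0]
        norm_num
    _ ≤ ((3 : ℝ) ^ (n : ℕ)) ^ ((1 : ℝ) / 3) := h1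
    _ = (3 : ℝ) ^ ((n : ℝ) / 3) := by
        rw [← Real.rpow_natCast (3 : ℝ) n, ← Real.rpow_mul (by norm_num)]
        ring_nf

lemma one_le_rpow3 (x : ℝ) (hx : 0 ≤ x) : (1 : ℝ) ≤ (3 : ℝ) ^ x := by
  calc (1 : ℝ) = (3 : ℝ) ^ (0 : ℝ) := (Real.rpow_zero 3).symm
    _ ≤ (3 : ℝ) ^ x := Real.rpow_le_rpow_of_exponent_le (by norm_num) hx

lemma rpow3_mono {x y : ℝ} (h : x ≤ y) : (3 : ℝ) ^ x ≤ (3 : ℝ) ^ y :=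
  Real.rpow_le_rpow_of_exponent_le (by norm_num) h

variable {V : Type*}

lemma transfer_to_self {G : SimpleGraph V} {u v : V} (p : G.Walk u v) (h) :
    p.transfer G h = p := by
  induction p with
  | nil => simp
  | cons _ _ ih => simp [Walk.transfer, ih]

lemma finite_pathSubtype [Fintype V] (G : SimpleGraph V) (a b : V) :
    Finite {p : G.Walk a b // p.IsPath} := by
  classical
  exact Finite.of_fintype (G.Path a b)

instance subgraphFinite [Finite V] {G : SimpleGraph V} : Finite G.Subgraph := by
  classical
  apply Finite.of_injective (fun H : G.Subgraph => (H.verts, fun v w => H.Adj v w))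
  rintro H K h
  rw [Prod.ext_iff] at h
  exact SimpleGraph.Subgraph.ext h.1 h.2


universe ux


theorem pathCount_le : ∀ (m : ℕ) {V : Type ux} [Fintype V] (G : SimpleGraph V) (a b : V),
    G.edgeSet.ncard ≤ m →
    ((Nat.card {p : G.Walk a b // p.IsPath} : ℝ)) ≤ (3 : ℝ) ^ ((m : ℝ) / 3) := by
  intro m
  induction m using Nat.strong_induction_on with
  | _ m IH =>
  intro V _ G a b hm
  classical
  have hR1 : (1 : ℝ) ≤ (3 : ℝ) ^ ((m : ℝ) / 3) := one_le_rpow3 _ (by positivity)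
  by_cases hab : a = b
  · subst hab
    have hss : Subsingleton {p : G.Walk a a // p.IsPath} := by
      constructor
      rintro ⟨p, hp⟩ ⟨q, hq⟩
      rw [Walk.isPath_iff_eq_nil] at hp hq
      subst hp; subst hq; rfl
    have h1 : Nat.card {p : G.Walk a a // p.IsPath} ≤ 1 := by
      haveI := hss
      haveI : Finite {p : G.Walk a a // p.IsPath} := finite_pathSubtype G a a
      exact Finite.card_le_one_iff_subsingleton.mpr hss
    calc ((Nat.card {p : G.Walk a a // p.IsPath} : ℝ)) ≤ 1 := by exact_mod_cast h1
      _ ≤ _ := hR1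
  · by_cases hzero : Nat.card {p : G.Walk a b // p.IsPath} = 0
    · rw [hzero]; push_cast; positivity
    · have hne : Nonempty {p : G.Walk a b // p.IsPath} := by
        by_contra h
        rw [not_nonempty_iff] at h
        exact hzero (Nat.card_of_isEmpty)
      obtain ⟨⟨p₀, hp₀⟩⟩ := hne
      have hd1 : 0 < G.degree a := by
        rw [G.degree_pos_iff_exists_adj]
        exact ⟨p₀.getVert 1, p₀.adj_snd (Walk.not_nil_of_ne hab)⟩
      set S : Set (Sym2 V) := G.incidenceSet a with hSdef
      set G' : SimpleGraph V := G.deleteEdges S with hG'def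
      have hSsub : S ⊆ G.edgeSet := G.incidenceSet_subset a
      have hfinE : G.edgeSet.Finite := Set.toFinite _
      have hScard : S.ncard = G.degree a := by
        rw [← Nat.card_coe_set_eq, Nat.card_congr (G.incidenceSetEquivNeighborSet a),
          Nat.card_eq_fintype_card]
        exact G.card_neighborSet_eq_degree a
      have hdm : G.degree a ≤ m := by
        rw [← hScard]
        exact le_trans (Set.ncard_le_ncard hSsub hfinE) hm
      have hG'card : G'.edgeSet.ncard ≤ m - G.degree a := by
        rw [hG'def, edgeSet_deleteEdges, Set.ncard_diff hSsub (Set.Finite.subset hfinE hSsub), hScard]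
        omega
      -- the injection
      have hmono : G'.edgeSet ⊆ G.edgeSet := by
        rw [hG'def, edgeSet_deleteEdges]; exact Set.diff_subset
      let T := Σ x : {x // x ∈ G.neighborFinset a}, {q : G'.Walk x.1 b // q.IsPath}
      haveI hfib : ∀ x : {x // x ∈ G.neighborFinset a}, Finite {q : G'.Walk x.1 b // q.IsPath} :=
        fun x => finite_pathSubtype G' x.1 b
      haveI : Finite T := by infer_instance
      let ρ : T → G.Walk a b := fun t =>
        Walk.cons ((G.mem_neighborFinset a t.1.1).mp t.1.2)
          (t.2.1.transfer G (fun e he => hmono (t.2.1.edges_subset_edgeSet he)))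
      let Φ : {p : G.Walk a b // p.IsPath} → T := fun pp =>
        have hnn : ¬ pp.1.Nil := Walk.not_nil_of_ne hab
        have hp' : (Walk.cons (pp.1.adj_snd hnn) pp.1.tail).IsPath := by
          rw [pp.1.cons_tail_eq hnn]; exact pp.2
        have htp : pp.1.tail.IsPath := ((Walk.cons_isPath_iff _ _).mp hp').1
        have hna : a ∉ pp.1.tail.support := ((Walk.cons_isPath_iff _ _).mp hp').2
        have hedges : ∀ e, e ∈ pp.1.tail.edges → e ∉ S := by
          intro e he hesmem
          have hae : a ∈ e := hesmem.2
          induction e with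
          | h x y =>
            rcases Sym2.mem_iff.mp hae with rfl | rfl
            · exact hna (pp.1.tail.fst_mem_support_of_mem_edges he)
            · exact hna (pp.1.tail.snd_mem_support_of_mem_edges he)
        ⟨⟨pp.1.getVert 1, (G.mem_neighborFinset a _).mpr (pp.1.adj_snd hnn)⟩,
          ⟨pp.1.tail.toDeleteEdges S hedges, Walk.IsPath.toDeleteEdges G S htp hedges⟩⟩
      have hretr : ∀ pp : {p : G.Walk a b // p.IsPath}, ρ (Φ pp) = pp.1 := by
        intro pp
        have hnn : ¬ pp.1.Nil := Walk.not_nil_of_ne hab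
        simp only [Φ, ρ, Walk.toDeleteEdges, Walk.transfer_transfer, transfer_to_self]
        rw [Walk.transfer_transfer, transfer_to_self]
        exact pp.1.cons_tail_eq hnn
      have hinj : Function.Injective Φ := by
        intro p₁ p₂ h
        apply Subtype.ext
        rw [← hretr p₁, ← hretr p₂, h]
      have hcardle : Nat.card {p : G.Walk a b // p.IsPath} ≤ Nat.card T :=
        Nat.card_le_card_of_injective Φ hinj
      -- compute card T
      haveI : ∀ x : {x // x ∈ G.neighborFinset a}, Fintype {q : G'.Walk x.1 b // q.IsPath} :=
        fun x => Fintype.ofFinite _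
      have hTcard : Nat.card T = ∑ x : {x // x ∈ G.neighborFinset a},
          Nat.card {q : G'.Walk x.1 b // q.IsPath} := by
        rw [Nat.card_eq_fintype_card, Fintype.card_sigma]
        exact Finset.sum_congr rfl (fun x _ => (Nat.card_eq_fintype_card).symm)
      -- bound each fiber
      have hfibbound : ∀ x : {x // x ∈ G.neighborFinset a},
          ((Nat.card {q : G'.Walk x.1 b // q.IsPath} : ℝ)) ≤
            (3 : ℝ) ^ (((m - G.degree a : ℕ) : ℝ) / 3) := by
        intro x
        exact IH (m - G.degree a) (by omega) G' x.1 b hG'card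
      have hsum : ((Nat.card T : ℝ)) ≤
          (G.degree a : ℝ) * (3 : ℝ) ^ (((m - G.degree a : ℕ) : ℝ) / 3) := by
        rw [hTcard]
        push_cast
        calc (∑ x : {x // x ∈ G.neighborFinset a},
              ((Nat.card {q : G'.Walk x.1 b // q.IsPath} : ℝ)))
            ≤ ∑ _x : {x // x ∈ G.neighborFinset a},
              (3 : ℝ) ^ (((m - G.degree a : ℕ) : ℝ) / 3) :=
              Finset.sum_le_sum (fun x _ => hfibbound x)
          _ = (Fintype.card {x // x ∈ G.neighborFinset a} : ℝ) *
              (3 : ℝ) ^ (((m - G.degree a : ℕ) : ℝ) / 3) := by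
              rw [Finset.sum_const, Fintype.card, nsmul_eq_mul]
          _ = (G.degree a : ℝ) * (3 : ℝ) ^ (((m - G.degree a : ℕ) : ℝ) / 3) := by
              rw [Fintype.card_coe]
              rfl
      -- final numeric step
      have hcast : ((m - G.degree a : ℕ) : ℝ) = (m : ℝ) - (G.degree a : ℝ) := by
        push_cast [Nat.cast_sub hdm]; ring
      have hnum : (G.degree a : ℝ) * (3 : ℝ) ^ (((m - G.degree a : ℕ) : ℝ) / 3)
          ≤ (3 : ℝ) ^ ((m : ℝ) / 3) := by
        rw [hcast]
        calc (G.degree a : ℝ) * (3 : ℝ) ^ (((m : ℝ) - (G.degree a : ℝ)) / 3)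
            ≤ (3 : ℝ) ^ ((G.degree a : ℝ) / 3) *
              (3 : ℝ) ^ (((m : ℝ) - (G.degree a : ℝ)) / 3) := by
              apply mul_le_mul_of_nonneg_right (nat_le_rpow3 _) (by positivity)
          _ = (3 : ℝ) ^ ((G.degree a : ℝ) / 3 + ((m : ℝ) - (G.degree a : ℝ)) / 3) := by
              rw [← Real.rpow_add (by norm_num)]
          _ = (3 : ℝ) ^ ((m : ℝ) / 3) := by ring_nf
      calc ((Nat.card {p : G.Walk a b // p.IsPath} : ℝ)) ≤ (Nat.card T : ℝ) := by
            exact_mod_cast hcardle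
        _ ≤ (G.degree a : ℝ) * (3 : ℝ) ^ (((m - G.degree a : ℕ) : ℝ) / 3) := hsum
        _ ≤ (3 : ℝ) ^ ((m : ℝ) / 3) := hnum


variable {G : SimpleGraph V}


lemma cycle_tail_facts {v : V} {w : G.Walk v v} (hw : w.IsCycle) :
    w.tail.IsPath ∧ s(v, w.getVert 1) ∉ w.tail.edges := by
  have hn := hw.not_nil
  rw [← w.cons_tail_eq hn] at hw
  exact (Walk.cons_isCycle_iff _ _).mp hw

lemma snd_ne_penult {x : V} {w : G.Walk x x} (hw : w.IsCycle) :
    w.getVert 1 ≠ w.reverse.getVert 1 := by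
  have h3 := hw.three_le_length
  have hn := hw.not_nil
  obtain ⟨htp, -⟩ := cycle_tail_facts hw
  have hlen : w.tail.length + 1 = w.length := Walk.length_tail_add_one hn
  set q := w.tail with hq
  -- express penultimate vertex via q
  have hβ : w.reverse.getVert 1 = q.reverse.getVert 1 := by
    rw [Walk.getVert_reverse, Walk.getVert_reverse]
    have h1 : q.length - 1 + 1 = w.length - 1 := by omega
    rw [← h1, hq, Walk.getVert_tail _]
  intro heq
  rw [hβ] at heq
  -- q.reverse is a path from x to (w.getVert 1) with second vertex equal to its end
  have hqrev : q.reverse.IsPath := htp.reverse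
  have hne : x ≠ w.getVert 1 := (w.adj_snd hn).ne
  have hnn' : ¬ q.reverse.Nil := Walk.not_nil_of_ne hne
  have hr : q.reverse.tail.IsPath := hqrev.tail
  have hcast : q.reverse.getVert 1 = w.getVert 1 := heq.symm
  have hcopy : (q.reverse.tail.copy hcast rfl).IsPath := by
    rw [Walk.isPath_copy]; exact hr
  rw [Walk.isPath_iff_eq_nil] at hcopy
  have hlen0 : q.reverse.tail.length = 0 := by
    have := congrArg Walk.length hcopy
    simpa using this
  have h5 : q.reverse.length = 1 := by
    have h2 := Walk.length_tail_add_one hnn'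
    omega
  rw [Walk.length_reverse] at h5
  omega

lemma two_le_ncard_neighborSet_start {x : V} {w : G.Walk x x} (hw : w.IsCycle) :
    2 ≤ (w.toSubgraph.neighborSet x).ncard := by
  have h3 := hw.three_le_length
  have hα : w.toSubgraph.Adj x (w.getVert 1) := by
    have := w.toSubgraph_adj_getVert (i := 0) (by omega)
    simpa using this
  have hβ : w.toSubgraph.Adj x (w.reverse.getVert 1) := by
    have := w.reverse.toSubgraph_adj_getVert (i := 0)
      (by rw [Walk.length_reverse]; omega)
    rw [Walk.toSubgraph_reverse] at this
    simpa using this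
  have hsub : {w.getVert 1, w.reverse.getVert 1} ⊆ w.toSubgraph.neighborSet x := by
    rintro z (rfl | rfl)
    · exact hα
    · exact hβ
  calc 2 = ({w.getVert 1, w.reverse.getVert 1} : Set V).ncard :=
        (Set.ncard_pair (snd_ne_penult hw)).symm
    _ ≤ _ := Set.ncard_le_ncard hsub (w.finite_neighborSet_toSubgraph)

lemma two_le_ncard_neighborSet {x t : V} {w : G.Walk x x} (hw : w.IsCycle)
    (ht : t ∈ w.support) : 2 ≤ (w.toSubgraph.neighborSet t).ncard := by
  classical
  have h1 := two_le_ncard_neighborSet_start (hw.rotate ht)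
  rwa [Walk.toSubgraph_rotate] at h1

lemma cycle_reverse {x : V} {w : G.Walk x x} (hw : w.IsCycle) : w.reverse.IsCycle := by
  rw [Walk.isCycle_def] at hw ⊢
  obtain ⟨ht, hnn, hnd⟩ := hw
  have hlen1 : 1 ≤ w.length := by
    have hnil : ¬ w.Nil := fun h => hnn h.eq_nil
    rwa [Walk.not_nil_iff_lt_length] at hnil
  refine ⟨Walk.IsTrail.reverse _ ht, ?_, ?_⟩
  · intro h
    apply hnn
    have := congrArg Walk.reverse h
    rwa [Walk.reverse_reverse, Walk.reverse_nil] at this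
  · have hsup : w.support = x :: w.support.tail := w.support_eq_cons
    have hsup2 : w.reverse.support = x :: w.reverse.support.tail :=
      w.reverse.support_eq_cons
    set rt := w.reverse.support.tail with hrt
    have hsup3 : w.support = (x :: rt).reverse := by
      rw [← hsup2, Walk.support_reverse, List.reverse_reverse]
    have h4 : x :: w.support.tail = rt.reverse ++ [x] := by
      rw [← hsup, hsup3]
      simp
    have hlent : w.support.tail.length = w.length := by
      have h5 := w.length_support
      rw [hsup] at h5
      simp only [List.length_cons] at h5
      omega
    rcases hrev : rt.reverse with _ | ⟨r0, rs⟩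
    · exfalso
      rw [hrev] at h4
      simp only [List.nil_append] at h4
      have : w.support.tail = [] := by
        have := congrArg List.tail h4
        simpa using this
      rw [this] at hlent
      simp at hlent
      omega
    · rw [hrev] at h4
      simp only [List.cons_append, List.cons.injEq] at h4
      obtain ⟨hr0, htail⟩ := h4
      have hgoal : rt.Nodup := by
        rw [← List.nodup_reverse, hrev, ← hr0]
        rw [htail] at hnd
        simp only [List.nodup_append, List.nodup_cons, List.nodup_reverse,
          List.disjoint_singleton, List.mem_singleton, List.nodup_nil] at hnd ⊢
        tauto
      exact hgoal



lemma exists_cycle_walk [Fintype V] {H : G.Subgraph}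
    (hconn : H.coe.Connected) (hdeg : ∀ u ∈ H.verts, (H.neighborSet u).ncard = 2)
    {v : V} (hv : v ∈ H.verts) :
    ∃ w : G.Walk v v, w.IsCycle ∧ w.toSubgraph = H := by
  classical
  set L : Set ℕ :=
    {n | ∃ (x y : V) (p : G.Walk x y), p.IsPath ∧ p.toSubgraph ≤ H ∧ p.length = n} with hL
  have hLne : L.Nonempty := by
    refine ⟨0, v, v, Walk.nil, Walk.IsPath.nil, ?_, rfl⟩
    exact (G.singletonSubgraph_le_iff v H).mpr hv
  have hLbdd : BddAbove L := by
    refine ⟨Fintype.card V, ?_⟩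
    rintro n ⟨x, y, p, hp, -, rfl⟩
    exact le_of_lt hp.length_lt
  obtain ⟨x, y, p, hp, hsub, hlen⟩ := Nat.sSup_mem hLne hLbdd
  have hmax : ∀ (x' y' : V) (q : G.Walk x' y'), q.IsPath → q.toSubgraph ≤ H →
      q.length ≤ sSup L := fun x' y' q hq hq2 => le_csSup hLbdd ⟨x', y', q, hq, hq2, rfl⟩
  have hxH : x ∈ H.verts := hsub.1 p.start_mem_verts_toSubgraph
  -- maximality: all H-neighbours of x are on p
  have hext : ∀ z, H.Adj x z → z ∈ p.support := by
    intro z hz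
    by_contra hzs
    have hq : (Walk.cons (hz.symm.adj_sub) p).IsPath := hp.cons hzs
    have hq2 : (Walk.cons (hz.symm.adj_sub) p).toSubgraph ≤ H := by
      simp only [Walk.toSubgraph]
      exact sup_le (SimpleGraph.subgraphOfAdj_le_of_adj H hz.symm) hsub
    have h9 := hmax _ _ _ hq hq2
    simp only [Walk.length_cons] at h9
    omega
  have hnn : ¬ p.Nil := by
    intro hnil
    have hsupp : p.support = [x] := Walk.nil_iff_support_eq.mp hnil
    have h2 := hdeg x hxH
    have hne : (H.neighborSet x).Nonempty := by
      apply Set.nonempty_of_ncard_ne_zero; omega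
    obtain ⟨z, hz⟩ := hne
    have h10 := hext z hz
    rw [hsupp, List.mem_singleton] at h10
    subst h10
    exact G.loopless.irrefl _ hz.adj_sub
  have hplen : 0 < p.length := Walk.not_nil_iff_lt_length.mp hnn
  have hxy : x ≠ y := by
    intro h; subst h
    rw [Walk.isPath_iff_eq_nil] at hp
    exact hnn (by rw [hp]; exact Walk.nil_nil)
  set s1 := p.getVert 1 with hs1
  have hxs : H.Adj x s1 := by
    have h11 := p.toSubgraph_adj_getVert (i := 0) hplen
    rw [Walk.getVert_zero] at h11
    exact hsub.2 h11
  -- the key step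
  have key : ∀ z, H.Adj x z → z ≠ s1 → z = y := by
    intro z hz hzs
    by_contra hzy
    have hzsup := hext z hz
    have hzx : x ≠ z := hz.adj_sub.ne
    set q1 := p.takeUntil z hzsup with hq1
    set q2 := p.dropUntil z hzsup with hq2
    have hspec : q1.append q2 = p := p.take_spec hzsup
    have hq1p : q1.IsPath := hp.takeUntil hzsup
    have hq2p : q2.IsPath := hp.dropUntil hzsup
    have hq1nn : ¬ q1.Nil := Walk.not_nil_of_ne hzx
    have hq2nn : ¬ q2.Nil := Walk.not_nil_of_ne hzy
    have hq1len : 0 < q1.length := Walk.not_nil_iff_lt_length.mp hq1nn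
    have hq2len : 0 < q2.length := Walk.not_nil_iff_lt_length.mp hq2nn
    have hps : p.toSubgraph = q1.toSubgraph ⊔ q2.toSubgraph := by
      rw [← hspec, Walk.toSubgraph_append]
    have hsub1 : q1.toSubgraph ≤ H := le_trans (by rw [hps]; exact le_sup_left) hsub
    have hsub2 : q2.toSubgraph ≤ H := le_trans (by rw [hps]; exact le_sup_right) hsub
    have hq1rnn : ¬ q1.reverse.Nil := Walk.not_nil_of_ne (Ne.symm hzx)
    set w' := q1.reverse.getVert 1 with hw'
    have hw'adj : H.Adj z w' := by
      have h6 := q1.reverse.toSubgraph_adj_getVert (i := 0)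
        (by rw [Walk.length_reverse]; exact hq1len)
      rw [Walk.toSubgraph_reverse] at h6
      rw [Walk.getVert_zero] at h6
      exact hsub1.2 h6
    set s2 := q2.getVert 1 with hs2
    have hs2adj : H.Adj z s2 := by
      have h6 := q2.toSubgraph_adj_getVert (i := 0) hq2len
      rw [Walk.getVert_zero] at h6
      exact hsub2.2 h6
    have hnd : (q1.support ++ q2.support.tail).Nodup := by
      have h12 := hp.support_nodup
      rw [← hspec, Walk.support_append] at h12
      exact h12
    rw [List.nodup_append] at hnd
    have hw'q1 : w' ∈ q1.support := by
      have h8 : w' ∈ q1.reverse.support := by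
        rw [Walk.mem_support_iff_exists_getVert]
        exact ⟨1, rfl, by rw [Walk.length_reverse]; omega⟩
      rwa [Walk.support_reverse, List.mem_reverse] at h8
    have hs2q2t : s2 ∈ q2.support.tail := by
      rw [← Walk.support_tail_of_not_nil _ hq2nn]
      exact Walk.start_mem_support _
    have hw's2 : w' ≠ s2 := fun h => hnd.2.2 _ hw'q1 _ hs2q2t h
    have hzH : z ∈ H.verts := hz.snd_mem
    have hNz : H.neighborSet z = {w', s2} := by
      refine (Set.eq_of_subset_of_ncard_le ?_ ?_ (Set.toFinite _)).symm
      · rintro t (rfl | rfl)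
        · exact hw'adj
        · exact hs2adj
      · rw [hdeg z hzH, Set.ncard_pair hw's2]
    have hxN : x ∈ H.neighborSet z := hz.symm
    rw [hNz] at hxN
    rcases hxN with hxw' | hxs2
    · -- x is the predecessor of z on q1 : forces q1 to be a single edge
      have hq1rp : q1.reverse.IsPath := hq1p.reverse
      have hr : q1.reverse.tail.IsPath := hq1rp.tail
      have hcast : q1.reverse.getVert 1 = x := hxw'.symm
      have hcopy : (q1.reverse.tail.copy hcast rfl).IsPath := by
        rw [Walk.isPath_copy]; exact hr
      rw [Walk.isPath_iff_eq_nil] at hcopy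
      have hlen0 : q1.reverse.tail.length = 0 := by
        simpa using congrArg Walk.length hcopy
      have hq1len1 : q1.length = 1 := by
        have h13 := Walk.length_tail_add_one hq1rnn
        rw [hlen0] at h13
        have h14 := q1.length_reverse
        omega
      have hzq1 : q1.getVert 1 = z := by
        have h15 := q1.getVert_length
        rwa [hq1len1] at h15
      have hgoal : p.getVert 1 = z := by
        rw [← hspec, Walk.getVert_append]
        rw [if_neg (by omega)]
        rw [hq1len1]
        simpa using rfl
      exact hzs (by rw [hs1, hgoal])
    · exact hnd.2.2 _ q1.start_mem_support _ hs2q2t hxs2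
  -- conclude H.Adj x y with y ≠ s1
  obtain ⟨a, b, hab, hNx⟩ := Set.ncard_eq_two.mp (hdeg x hxH)
  have haadj : H.Adj x a := by
    have : a ∈ H.neighborSet x := by rw [hNx]; exact Set.mem_insert _ _
    exact this
  have hbadj : H.Adj x b := by
    have : b ∈ H.neighborSet x := by rw [hNx]; exact Set.mem_insert_iff.mpr (Or.inr rfl)
    exact this
  have hs1N : s1 = a ∨ s1 = b := by
    have : s1 ∈ H.neighborSet x := hxs
    rwa [hNx] at this
  have hy : H.Adj x y ∧ y ≠ s1 := by
    rcases hs1N with h | h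
    · have hbneq : b ≠ s1 := by rw [h]; exact hab.symm
      have hb : b = y := key b hbadj hbneq
      exact ⟨hb ▸ hbadj, hb ▸ hbneq⟩
    · have haneq : a ≠ s1 := by rw [h]; exact hab
      have ha : a = y := key a haadj haneq
      exact ⟨ha ▸ haadj, ha ▸ haneq⟩
  obtain ⟨hxyH, hys⟩ := hy
  have hGxy : G.Adj x y := hxyH.adj_sub
  set c : G.Walk x x := Walk.cons hGxy p.reverse with hc
  have hcyc : c.IsCycle := by
    rw [hc, Walk.cons_isCycle_iff]
    refine ⟨hp.reverse, ?_⟩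
    rw [Walk.edges_reverse, List.mem_reverse]
    intro hmem
    have hpcons : p.edges = s(x, s1) :: p.tail.edges := by
      conv_lhs => rw [← p.cons_tail_eq hnn]
      rw [Walk.edges_cons, hs1]
    rw [hpcons] at hmem
    rcases List.mem_cons.mp hmem with h | h
    · exact hys (Sym2.congr_right.mp h)
    · have hxt : x ∈ p.tail.support := p.tail.fst_mem_support_of_mem_edges h
      have h16 : (Walk.cons (p.adj_snd hnn) p.tail).IsPath := by
        rw [p.cons_tail_eq hnn]; exact hp
      exact ((Walk.cons_isPath_iff _ _).mp h16).2 hxt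
  have hcle : c.toSubgraph ≤ H := by
    rw [hc]
    simp only [Walk.toSubgraph]
    refine sup_le (SimpleGraph.subgraphOfAdj_le_of_adj H hxyH) ?_
    rw [Walk.toSubgraph_reverse]
    exact hsub
  have hBs : ∀ t ∈ c.support, c.toSubgraph.neighborSet t = H.neighborSet t := by
    intro t ht
    apply Set.eq_of_subset_of_ncard_le
    · intro r hr; exact hcle.2 hr
    · have htH : t ∈ H.verts := hcle.1 ((Walk.mem_verts_toSubgraph c).mpr ht)
      rw [hdeg t htH]
      exact two_le_ncard_neighborSet hcyc ht
    · exact Set.toFinite _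
  have hcov : ∀ u ∈ H.verts, u ∈ c.support := by
    intro u hu
    obtain ⟨W⟩ := hconn.preconnected ⟨x, hxH⟩ ⟨u, hu⟩
    have hW : ∀ (sα tα : H.verts) (Wk : H.coe.Walk sα tα),
        (sα : V) ∈ c.support → (tα : V) ∈ c.support := by
      intro sα tα Wk
      induction Wk with
      | nil => exact id
      | @cons uα vα wα h q ih =>
        intro hs
        apply ih
        have hadj : H.Adj (uα : V) (vα : V) := h
        have h17 : (vα : V) ∈ H.neighborSet (uα : V) := hadj
        rw [← hBs _ hs] at h17
        have h18 : c.toSubgraph.Adj (uα : V) (vα : V) := h17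
        exact (Walk.mem_verts_toSubgraph c).mp h18.snd_mem
    exact hW _ _ W c.start_mem_support
  have hfinal : c.toSubgraph = H := by
    apply le_antisymm hcle
    constructor
    · intro u hu
      exact (Walk.mem_verts_toSubgraph c).mpr (hcov u hu)
    · intro t r htr
      have htsup : t ∈ c.support := hcov t htr.fst_mem
      have h19 : r ∈ H.neighborSet t := htr
      rw [← hBs t htsup] at h19
      exact h19
  have hvc : v ∈ c.support := hcov v hv
  refine ⟨c.rotate _ hvc, hcyc.rotate hvc, ?_⟩
  rw [Walk.toSubgraph_rotate]
  exact hfinal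


end CycAux

open CycAux

/-- If `G` has `n ≥ 3` vertices, `m` edges, `m/(n-1) < 3`, and `v` is a vertex of
maximum degree, then the number of cycles of `G` containing `v` is at most
`(Δ(G)/2) 3^(m/3)`. -/
theorem cycles_through_max_degree_vertex_sparse {V : Type*} [Fintype V] (G : SimpleGraph V)
    [DecidableRel G.Adj] (n m : ℕ) (hn : 3 ≤ n) (hcard : Fintype.card V = n)
    (hm : G.edgeSet.ncard = m) (hlt : (m : ℝ) / ((n : ℝ) - 1) < 3)
    (v : V) (hv : G.degree v = G.maxDegree) :
    ({H : G.Subgraph | H.IsCycleSub ∧ v ∈ H.verts}.ncard : ℝ) ≤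
      (G.maxDegree : ℝ) / 2 * (3 : ℝ) ^ ((m : ℝ) / 3) := by
  classical
  set 𝒮 := {H : G.Subgraph | H.IsCycleSub ∧ v ∈ H.verts} with hSdef
  haveI : Finite (G.Subgraph) := subgraphFinite
  have hR0 : (0 : ℝ) ≤ (3 : ℝ) ^ ((m : ℝ) / 3) := by positivity
  -- choice of a cycle walk for each cycle subgraph through v
  have hchoice : ∀ H : ↥𝒮, ∃ w : G.Walk v v, w.IsCycle ∧ w.toSubgraph = H.1 := by
    rintro ⟨H, ⟨⟨hconn, hdeg⟩, hvH⟩⟩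
    exact exists_cycle_walk hconn hdeg hvH
  choose F hF1 hF2 using hchoice
  -- cycle walks at v are finite
  haveI hCWfin : Finite {w : G.Walk v v // w.IsCycle} := by
    have hρ : ∀ ww : {w : G.Walk v v // w.IsCycle},
        (fun t : Σ x : V, {q : G.Walk x v // q.IsPath} =>
          if h : G.Adj v t.1 then some (Walk.cons h t.2.1) else none)
          (⟨ww.1.getVert 1, ⟨ww.1.tail, (cycle_tail_facts ww.2).1⟩⟩ :
            Σ x : V, {q : G.Walk x v // q.IsPath}) = some ww.1 := by
      intro ww
      dsimp only
      rw [dif_pos (ww.1.adj_snd ww.2.not_nil)]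
      exact congrArg some (ww.1.cons_tail_eq ww.2.not_nil)
    haveI : ∀ x : V, Finite {q : G.Walk x v // q.IsPath} :=
      fun x => finite_pathSubtype G x v
    apply Finite.of_injective
      (fun ww : {w : G.Walk v v // w.IsCycle} =>
        (⟨ww.1.getVert 1, ⟨ww.1.tail, (cycle_tail_facts ww.2).1⟩⟩ :
          Σ x : V, {q : G.Walk x v // q.IsPath}))
    intro w1 w2 h
    apply Subtype.ext
    have h2 := congrArg (fun t : Σ x : V, {q : G.Walk x v // q.IsPath} =>
      if h : G.Adj v t.1 then some (Walk.cons h t.2.1) else none) h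
    have h3 := (hρ w1).symm.trans (h2.trans (hρ w2))
    exact Option.some_injective _ h3
  -- doubling: two orientations
  have h2card : Nat.card ↥𝒮 * 2 ≤ Nat.card {w : G.Walk v v // w.IsCycle} := by
    let Φ2 : ↥𝒮 × Bool → {w : G.Walk v v // w.IsCycle} := fun t =>
      if t.2 then ⟨(F t.1).reverse, cycle_reverse (hF1 t.1)⟩ else ⟨F t.1, hF1 t.1⟩
    have hinj2 : Function.Injective Φ2 := by
      rintro ⟨H1, b1⟩ ⟨H2, b2⟩ heq
      have hval := congrArg Subtype.val heq
      have hts : (F H1).toSubgraph = (F H2).toSubgraph := by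
        cases b1 <;> cases b2 <;>
          simp only [Φ2, if_true, if_false, Bool.false_eq_true] at hval
        · exact congrArg _ hval
        · rw [hval, Walk.toSubgraph_reverse]
        · rw [← hval, Walk.toSubgraph_reverse]
        · have h20 := congrArg Walk.toSubgraph hval
          rwa [Walk.toSubgraph_reverse, Walk.toSubgraph_reverse] at h20
      obtain rfl : H1 = H2 := Subtype.ext (by rw [← hF2 H1, ← hF2 H2, hts])
      obtain rfl : b1 = b2 := by
        cases b1 <;> cases b2 <;>
          simp only [Φ2, if_true, if_false, Bool.false_eq_true] at hval
        · rfl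
        · exact absurd (congrArg (fun q => Walk.getVert q 1) hval)
            (snd_ne_penult (hF1 H1))
        · exact absurd (congrArg (fun q => Walk.getVert q 1) hval).symm
            (snd_ne_penult (hF1 H1))
        · rfl
      rfl
    have := Nat.card_le_card_of_injective Φ2 hinj2
    rwa [Nat.card_prod, show Nat.card Bool = 2 by
      rw [Nat.card_eq_fintype_card]; exact Fintype.card_bool] at this
  -- mapping cycle walks to paths in edge-deleted graphs
  have h3card : ((Nat.card {w : G.Walk v v // w.IsCycle} : ℝ)) ≤
      (G.degree v : ℝ) * (3 : ℝ) ^ ((m : ℝ) / 3) := by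
    set T2 := Σ a : {x // x ∈ G.neighborFinset v},
      {q : (G.deleteEdges {s(v, a.1)}).Walk a.1 v // q.IsPath} with hT2
    haveI : ∀ a : {x // x ∈ G.neighborFinset v},
        Finite {q : (G.deleteEdges {s(v, a.1)}).Walk a.1 v // q.IsPath} :=
      fun a => finite_pathSubtype _ _ _
    haveI : Finite T2 := by infer_instance
    let ρ2 : T2 → G.Walk v v := fun t =>
      Walk.cons ((G.mem_neighborFinset v t.1.1).mp t.1.2)
        (t.2.1.transfer G (fun e he => by
          have h1 := t.2.1.edges_subset_edgeSet he
          rw [edgeSet_deleteEdges] at h1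
          exact h1.1))
    let Ψ : {w : G.Walk v v // w.IsCycle} → T2 := fun ww =>
      ⟨⟨ww.1.getVert 1, (G.mem_neighborFinset v _).mpr (ww.1.adj_snd ww.2.not_nil)⟩,
        ⟨ww.1.tail.toDeleteEdge s(v, ww.1.getVert 1) (cycle_tail_facts ww.2).2,
          Walk.IsPath.toDeleteEdges G _ (cycle_tail_facts ww.2).1 _⟩⟩
    have hretr2 : ∀ ww : {w : G.Walk v v // w.IsCycle}, ρ2 (Ψ ww) = ww.1 := by
      intro ww
      simp only [Ψ, ρ2, Walk.toDeleteEdges, Walk.transfer_transfer, transfer_to_self]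
      exact ww.1.cons_tail_eq ww.2.not_nil
    have hinj3 : Function.Injective Ψ := by
      intro w1 w2 h
      apply Subtype.ext
      rw [← hretr2 w1, ← hretr2 w2, h]
    have hcard3 : Nat.card {w : G.Walk v v // w.IsCycle} ≤ Nat.card T2 :=
      Nat.card_le_card_of_injective Ψ hinj3
    haveI : ∀ a : {x // x ∈ G.neighborFinset v},
        Fintype {q : (G.deleteEdges {s(v, a.1)}).Walk a.1 v // q.IsPath} :=
      fun a => Fintype.ofFinite _
    have hT2card : Nat.card T2 = ∑ a : {x // x ∈ G.neighborFinset v},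
        Nat.card {q : (G.deleteEdges {s(v, a.1)}).Walk a.1 v // q.IsPath} := by
      rw [Nat.card_eq_fintype_card, Fintype.card_sigma]
      exact Finset.sum_congr rfl (fun a _ => (Nat.card_eq_fintype_card).symm)
    have hfib : ∀ a : {x // x ∈ G.neighborFinset v},
        ((Nat.card {q : (G.deleteEdges {s(v, a.1)}).Walk a.1 v // q.IsPath} : ℝ)) ≤
          (3 : ℝ) ^ ((m : ℝ) / 3) := by
      intro a
      apply pathCount_le m
      rw [edgeSet_deleteEdges]
      calc (G.edgeSet \ {s(v, a.1)}).ncard ≤ G.edgeSet.ncard :=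
            Set.ncard_le_ncard Set.diff_subset (Set.toFinite _)
        _ = m := hm
    calc ((Nat.card {w : G.Walk v v // w.IsCycle} : ℝ)) ≤ (Nat.card T2 : ℝ) := by
          exact_mod_cast hcard3
      _ = ∑ a : {x // x ∈ G.neighborFinset v},
          ((Nat.card {q : (G.deleteEdges {s(v, a.1)}).Walk a.1 v // q.IsPath} : ℝ)) := by
          rw [hT2card]; push_cast; rfl
      _ ≤ ∑ _a : {x // x ∈ G.neighborFinset v}, (3 : ℝ) ^ ((m : ℝ) / 3) :=
          Finset.sum_le_sum (fun a _ => hfib a)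
      _ = (G.degree v : ℝ) * (3 : ℝ) ^ ((m : ℝ) / 3) := by
          rw [Finset.sum_const, nsmul_eq_mul]
          norm_cast
          rw [Finset.card_univ, Fintype.card_coe]
          rfl
  -- put it together
  have hncard : (𝒮.ncard : ℝ) = (Nat.card ↥𝒮 : ℝ) := by
    rw [Nat.card_coe_set_eq]
  rw [hncard]
  have h2R : (Nat.card ↥𝒮 : ℝ) * 2 ≤ (Nat.card {w : G.Walk v v // w.IsCycle} : ℝ) := by
    exact_mod_cast h2card
  rw [← hv]
  nlinarith [h2R, h3card]
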